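/- Recentering regularization characterization of bias-corrected KRR: the estimator f^♯_{D,λ} = f_{D,λ} + λ(λI + (1/N)S*S)^{-1} f_{D,λ} is the unique minimizer over H_K of (1/N)∑ᵢ(yᵢ − f(xᵢ))² + λ‖f − f_{D,λ}‖²_K. -/

import Mathlib

set_option maxHeartbeats 1000000

open RealInnerProductSpace ContinuousLinearMap

/-- Coercive operators (of the form `c•1 + positive`) are units in the endomorphism ring. -/
lemma aux_isUnit {H : Type*} [NormedAddCommGroup H] [InnerProductSpace ℝ H] [CompleteSpace H]
    (A : H →L[ℝ] H) (c : ℝ) (hc : 0 < c) (hcoer : ∀ x : H, c * ‖x‖ * ‖x‖ ≤ ⟪A x, x⟫) :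
    IsUnit A := by
  set B : H →L[ℝ] H →L[ℝ] ℝ := (innerSL ℝ).comp A with hB
  have hBco : IsCoercive B := ⟨c, hc, fun u => by simpa [hB] using hcoer u⟩
  set e := hBco.continuousLinearEquivOfBilin with he
  have hAe : ∀ v, A v = e v := by
    intro v
    refine (ext_inner_right ℝ fun w => ?_)
    rw [hBco.continuousLinearEquivOfBilin_apply]
    simp [hB]
  refine ⟨⟨A, (e.symm : H →L[ℝ] H), ?_, ?_⟩, rfl⟩
  · ext x
    simp [ContinuousLinearMap.mul_apply, hAe]
  · ext x
    have : (↑e.symm * A) x = e.symm (A x) := rfl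
    rw [this, hAe]
    simp

/-- Recentering-regularization characterization of bias-corrected KRR: the estimator
`f♯ = f_{D,λ} + λ(λI + (1/N)S*S)⁻¹ f_{D,λ}` is the unique minimizer over the RKHS of the
recentered regularized risk `(1/N)∑ᵢ(yᵢ − f(xᵢ))² + λ‖f − f_{D,λ}‖²_K`, where
`f_{D,λ} = (1/N)(λI + (1/N)S*S)⁻¹ S*y` is the KRR estimator and `S` the sampling
operator. -/
theorem stmt_12 {H : Type*} [NormedAddCommGroup H] [InnerProductSpace ℝ H] [CompleteSpace H]
    (N : ℕ) (hN : 0 < N)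
    (S : H →L[ℝ] EuclideanSpace ℝ (Fin N)) (y : EuclideanSpace ℝ (Fin N))
    (lam : ℝ) (hlam : 0 < lam) (fD fsharp : H)
    (hfD : fD = (1 / N : ℝ) •
      (Ring.inverse (lam • (1 : H →L[ℝ] H)
          + (1 / N : ℝ) • ((ContinuousLinearMap.adjoint S).comp S)))
        (ContinuousLinearMap.adjoint S y))
    (hfsharp : fsharp = fD + lam • (Ring.inverse (lam • (1 : H →L[ℝ] H)
        + (1 / N : ℝ) • ((ContinuousLinearMap.adjoint S).comp S))) fD) :
    (∀ f : H,
      (1 / N : ℝ) * ∑ i, (y i - S fsharp i) ^ 2 + lam * ‖fsharp - fD‖ ^ 2 ≤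
        (1 / N : ℝ) * ∑ i, (y i - S f i) ^ 2 + lam * ‖f - fD‖ ^ 2) ∧
    (∀ f : H,
      (1 / N : ℝ) * ∑ i, (y i - S f i) ^ 2 + lam * ‖f - fD‖ ^ 2 ≤
        (1 / N : ℝ) * ∑ i, (y i - S fsharp i) ^ 2 + lam * ‖fsharp - fD‖ ^ 2 →
      f = fsharp) := by
  have hNR : (0:ℝ) < (N:ℝ) := by exact_mod_cast hN
  set A : H →L[ℝ] H := lam • (1 : H →L[ℝ] H)
      + (1 / N : ℝ) • ((ContinuousLinearMap.adjoint S).comp S) with hA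
  have hAx : ∀ x : H, A x = lam • x + (1 / N : ℝ) • (ContinuousLinearMap.adjoint S (S x)) := by
    intro x; simp [hA]
  have hAip : ∀ x : H, ⟪A x, x⟫ = lam * ‖x‖ ^ 2 + (1 / N : ℝ) * ‖S x‖ ^ 2 := by
    intro x
    rw [hAx, inner_add_left, real_inner_smul_left, real_inner_smul_left,
      ContinuousLinearMap.adjoint_inner_left, real_inner_self_eq_norm_sq,
      real_inner_self_eq_norm_sq]
  have hUnit : IsUnit A := by
    refine aux_isUnit A lam hlam fun x => ?_
    rw [hAip]
    have h1 : (0:ℝ) ≤ (1 / N : ℝ) * ‖S x‖ ^ 2 := by positivity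
    nlinarith [sq_nonneg ‖x‖]
  have hinv : ∀ x : H, A (Ring.inverse A x) = x := by
    intro x
    have := Ring.mul_inverse_cancel A hUnit
    calc A (Ring.inverse A x) = (A * Ring.inverse A) x := rfl
      _ = x := by rw [this]; rfl
  -- basic identities
  have hAfD : A fD = (1 / N : ℝ) • (ContinuousLinearMap.adjoint S y) := by
    rw [hfD, map_smul, hinv]
  have hdiff : fsharp - fD = lam • (Ring.inverse A fD) := by
    rw [hfsharp]; abel
  have hAdiff : A (fsharp - fD) = lam • fD := by
    rw [hdiff, map_smul, hinv]
  have key : (1 / N : ℝ) • (ContinuousLinearMap.adjoint S (y - S fsharp))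
      = lam • (fsharp - fD) := by
    have e1 : (1 / N : ℝ) • (ContinuousLinearMap.adjoint S (S fsharp))
        = A fsharp - lam • fsharp := by rw [hAx]; abel
    calc (1 / N : ℝ) • (ContinuousLinearMap.adjoint S (y - S fsharp))
        = (1 / N : ℝ) • (ContinuousLinearMap.adjoint S y)
          - (1 / N : ℝ) • (ContinuousLinearMap.adjoint S (S fsharp)) := by
          rw [map_sub, smul_sub]
      _ = A fD - (A fsharp - lam • fsharp) := by rw [e1, hAfD]
      _ = lam • fsharp - A (fsharp - fD) := by rw [map_sub]; abel
      _ = lam • fsharp - lam • fD := by rw [hAdiff]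
      _ = lam • (fsharp - fD) := (smul_sub _ _ _).symm
  have hcross : ∀ h : H, (1 / N : ℝ) * ⟪y - S fsharp, S h⟫ = lam * ⟪fsharp - fD, h⟫ := by
    intro h
    calc (1 / N : ℝ) * ⟪y - S fsharp, S h⟫
        = (1 / N : ℝ) * ⟪ContinuousLinearMap.adjoint S (y - S fsharp), h⟫ := by
          rw [ContinuousLinearMap.adjoint_inner_left]
      _ = ⟪(1 / N : ℝ) • (ContinuousLinearMap.adjoint S (y - S fsharp)), h⟫ := by
          rw [real_inner_smul_left]
      _ = ⟪lam • (fsharp - fD), h⟫ := by rw [key]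
      _ = lam * ⟪fsharp - fD, h⟫ := real_inner_smul_left _ _ _
  have hsum : ∀ f : H, ∑ i, (y i - S f i) ^ 2 = ‖y - S f‖ ^ 2 := by
    intro f
    rw [← real_inner_self_eq_norm_sq]
    rw [PiLp.inner_apply]; simp [RCLike.inner_apply, sq]
  have expand : ∀ f : H,
      (1 / N : ℝ) * ‖y - S f‖ ^ 2 + lam * ‖f - fD‖ ^ 2
        = ((1 / N : ℝ) * ‖y - S fsharp‖ ^ 2 + lam * ‖fsharp - fD‖ ^ 2)
          + ((1 / N : ℝ) * ‖S (f - fsharp)‖ ^ 2 + lam * ‖f - fsharp‖ ^ 2) := by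
    intro f
    have h1 : y - S f = (y - S fsharp) - S (f - fsharp) := by rw [map_sub]; abel
    have h2 : f - fD = (fsharp - fD) + (f - fsharp) := by abel
    rw [h1, h2, norm_sub_sq_real, norm_add_sq_real]
    linarith [hcross (f - fsharp)]
  constructor
  · intro f
    rw [hsum f, hsum fsharp, expand f]
    have h1 : (0:ℝ) ≤ (1 / N : ℝ) * ‖S (f - fsharp)‖ ^ 2 + lam * ‖f - fsharp‖ ^ 2 := by
      positivity
    linarith
  · intro f hle
    rw [hsum f, hsum fsharp, expand f] at hle
    have h1 : (0:ℝ) ≤ (1 / N : ℝ) * ‖S (f - fsharp)‖ ^ 2 := by positivity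
    have h2 : lam * ‖f - fsharp‖ ^ 2 ≤ 0 := by linarith
    have h3 : ‖f - fsharp‖ ^ 2 ≤ 0 := by
      nlinarith [sq_nonneg ‖f - fsharp‖]
    have h4 : ‖f - fsharp‖ = 0 := by nlinarith [norm_nonneg (f - fsharp)]
    have : f - fsharp = 0 := norm_eq_zero.mp h4
    exact sub_eq_zero.mp this
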